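/- arXiv:1703.01484 — 6 statements merged into one kernel-verified Lean document; each statement's English description precedes it below -/
import Mathlib

section
/- Let f : ℝ → ℝ be convex, let y ∈ ℝ and x ∈ ℤ with y + 1 ≤ x, and let f^pl denote the piecewise-linear interpolation of f on integer breakpoints (f^pl(t) = f(⌊t⌋) + (t - ⌊t⌋)(f(⌈t⌉) - f(⌊t⌋))). If φ_y is a subgradient of f at y and φ_x is a subgradient of f^pl at x, then φ_y ≤ φ_x. -/
/-- Piecewise-linear interpolation of `f` on integer breakpoints. -/
noncomputable def fpl (f : ℝ → ℝ) (t : ℝ) : ℝ :=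
  f (⌊t⌋ : ℝ) + (t - (⌊t⌋ : ℝ)) * (f (⌈t⌉ : ℝ) - f (⌊t⌋ : ℝ))

/-- `φ` is a subgradient of `g` at `p`. -/
def IsSubgradientAt (g : ℝ → ℝ) (p φ : ℝ) : Prop :=
  ∀ q : ℝ, φ * (q - p) ≤ g q - g p

theorem stmt_0 (f : ℝ → ℝ) (hf : ConvexOn ℝ Set.univ f)
    (y : ℝ) (x : ℤ) (hxy : y + 1 ≤ (x : ℝ))
    (φy φx : ℝ)
    (hφy : IsSubgradientAt f y φy)
    (hφx : IsSubgradientAt (fpl f) (x : ℝ) φx) :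
    φy ≤ φx := by
  set X : ℝ := (x : ℝ) with hX
  have hd0 : (0:ℝ) < X - y := by simp only [hX]; linarith
  have h1 : φy * (X - y) ≤ f X - f y := hφy X
  have h2 : φx * ((X - 1) - X) ≤ fpl f (X - 1) - fpl f X := hφx (X - 1)
  have e1 : fpl f X = f X := by
    simp [fpl, hX]
  have e2 : fpl f (X - 1) = f (X - 1) := by
    have : X - 1 = ((x - 1 : ℤ) : ℝ) := by push_cast [hX]; ring
    rw [this]
    simp [fpl]
  -- convexity at the point X - 1 = a • y + b • X with a = 1/(X-y), b = (X-y-1)/(X-y)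
  have ha : (0:ℝ) ≤ 1 / (X - y) := by positivity
  have hb : (0:ℝ) ≤ (X - y - 1) / (X - y) := by
    apply div_nonneg _ hd0.le
    simp only [hX]; linarith
  have hab : 1 / (X - y) + (X - y - 1) / (X - y) = 1 := by
    field_simp
    ring
  have hconv := hf.2 (Set.mem_univ y) (Set.mem_univ X) ha hb hab
  have hpt : (1 / (X - y)) • y + ((X - y - 1) / (X - y)) • X = X - 1 := by
    simp only [smul_eq_mul]
    field_simp
    ring
  rw [hpt] at hconv
  simp only [smul_eq_mul] at hconv
  rw [e1, e2] at h2
  -- h2 : φx * (-1) ≤ f (X-1) - f X, i.e. f X - f (X-1) ≤ φx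
  have h3 : f X - f (X - 1) ≤ φx := by linarith
  have h4 : (f (X - 1)) * (X - y) ≤ f y + (X - y - 1) * f X := by
    have := mul_le_mul_of_nonneg_right hconv hd0.le
    calc f (X - 1) * (X - y) ≤ (1 / (X - y) * f y + (X - y - 1) / (X - y) * f X) * (X - y) := this
      _ = f y + (X - y - 1) * f X := by field_simp
  nlinarith [mul_le_mul_of_nonneg_right h3 hd0.le]
end

section
/- Let f : ℝ → ℝ be convex, let y ∈ ℤ and x ∈ ℝ with y + 1 ≤ x, and let f^pl denote the piecewise-linear interpolation of f on integer breakpoints. If φ_y is a subgradient of f^pl at y and φ_x is a subgradient of f at x, then φ_y ≤ φ_x. -/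
lemma fpl_int (f : ℝ → ℝ) (n : ℤ) : fpl f (n : ℝ) = f (n : ℝ) := by
  simp [fpl]

theorem stmt_1 (f : ℝ → ℝ) (hf : ConvexOn ℝ Set.univ f)
    (y : ℤ) (x : ℝ) (hxy : (y : ℝ) + 1 ≤ x)
    (φy φx : ℝ)
    (hφy : IsSubgradientAt (fpl f) (y : ℝ) φy)
    (hφx : IsSubgradientAt f x φx) :
    φy ≤ φx := by
  have hd : (0 : ℝ) < x - y := by linarith
  -- φy ≤ f(y+1) - f(y)
  have h1 : φy ≤ f ((y : ℝ) + 1) - f (y : ℝ) := by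
    have := hφy ((y : ℝ) + 1)
    have e1 : fpl f ((y : ℝ) + 1) = f ((y : ℝ) + 1) := by
      have := fpl_int f (y + 1); push_cast at this ⊢; linarith
    have e2 : fpl f (y : ℝ) = f (y : ℝ) := fpl_int f y
    rw [e1, e2] at this
    linarith
  -- convexity: (x - y) * (f(y+1) - f y) ≤ f x - f y
  have h2 : (x - y) * (f ((y : ℝ) + 1) - f (y : ℝ)) ≤ f x - f (y : ℝ) := by
    have ha : (0:ℝ) ≤ (x - y - 1) / (x - y) := by
      apply div_nonneg <;> linarith
    have hb : (0:ℝ) < 1 / (x - y) := by positivity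
    have hab : (x - y - 1) / (x - y) + 1 / (x - y) = 1 := by
      field_simp
      ring
    have := hf.2 (Set.mem_univ (y : ℝ)) (Set.mem_univ x) ha hb.le hab
    have hne : x - (y:ℝ) ≠ 0 := ne_of_gt hd
    have hpt : ((x - y - 1) / (x - y)) • (y : ℝ) + (1 / (x - y)) • x = (y : ℝ) + 1 := by
      simp only [smul_eq_mul]
      field_simp
      ring
    rw [hpt] at this
    simp only [smul_eq_mul] at this
    have h3 : (x - y) * f ((y : ℝ) + 1) ≤ (x - y - 1) * f (y : ℝ) + f x := by
      have := mul_le_mul_of_nonneg_left this hd.le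
      field_simp at this
      linarith
    nlinarith
  -- f x - f y ≤ (x - y) * φx
  have h4 : f x - f (y : ℝ) ≤ (x - y) * φx := by
    have := hφx (y : ℝ)
    nlinarith
  nlinarith [mul_le_mul_of_nonneg_left h1 hd.le]
end

section
/- Consider minimizing a separable convex function f(x) = Σ_{i=1}^n f_i(x_i), where each f_i : ℝ → ℝ is convex and M'-Lipschitz with M' < M, subject to prefix-sum constraints a_i ≤ Σ_{k≤σ(i)} x_k ≤ b_i for i ∈ {1,…,m-1} and Σ_k x_k = B, where the objective is Σ f̄_i(x_i) with f̄_i the exact L1-penalty extension of f_i outside [c_i, d_i] with slope M. If there exists a feasible solution x with c_i ≤ x_i ≤ d_i for all i, then every optimal solution x* of the penalized problem satisfies c_i ≤ x*_i ≤ d_i for all i. -/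
open Finset

/-- Exact L1-penalty extension of `f` outside `[c, d]` with slope `M`. -/
noncomputable def penExt (f : ℝ → ℝ) (c d M : ℝ) (x : ℝ) : ℝ :=
  if x < c then f c + M * (c - x)
  else if x ≤ d then f x
  else f d + M * (x - d)

/-- Feasibility for the RAP-NC constraint system (variables indexed `1,…,n`). -/
def FeasibleRAPNC (n m : ℕ) (σ : ℕ → ℕ) (a b : ℕ → ℝ) (B : ℝ) (x : ℕ → ℝ) : Prop :=
  (∀ i, 1 ≤ i → i ≤ m - 1 →
      a i ≤ ∑ k ∈ Finset.Icc 1 (σ i), x k ∧ ∑ k ∈ Finset.Icc 1 (σ i), x k ≤ b i) ∧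
  ∑ k ∈ Finset.Icc 1 n, x k = B

lemma Mp_nonneg {f : ℝ → ℝ} {M' : ℝ} (hlip : ∀ x y : ℝ, |f x - f y| ≤ M' * |x - y|) :
    0 ≤ M' := by
  have h := hlip 0 1
  have h0 : (0:ℝ) ≤ |f 0 - f 1| := abs_nonneg _
  norm_num at h
  linarith

lemma penExt_of_ge {f : ℝ → ℝ} {c d M x : ℝ} (hcd : c ≤ d) (hx : d ≤ x) :
    penExt f c d M x = f d + M * (x - d) := by
  unfold penExt
  split_ifs with h1 h2
  · linarith
  · have : x = d := le_antisymm h2 hx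
    subst this; ring
  · rfl

lemma penExt_incr_le {f : ℝ → ℝ} {c d M M' x y : ℝ} (hM : M' < M)
    (hlip : ∀ u v : ℝ, |f u - f v| ≤ M' * |u - v|)
    (hxy : x ≤ y) (hyd : y ≤ d) :
    penExt f c d M y - penExt f c d M x ≤ M' * (y - x) := by
  have hM0 : 0 ≤ M' := Mp_nonneg hlip
  have key : ∀ u v : ℝ, f u - f v ≤ M' * |u - v| := fun u v =>
    (le_abs_self _).trans (hlip u v)
  unfold penExt
  rcases lt_or_ge x c with hx | hx
  · rcases lt_or_ge y c with hy | hy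
    · rw [if_pos hx, if_pos hy]
      nlinarith
    · have hyc : ¬ (y < c) := not_lt.mpr hy
      rw [if_pos hx, if_neg hyc, if_pos hyd]
      have := key y c
      rw [abs_of_nonneg (by linarith : (0:ℝ) ≤ y - c)] at this
      nlinarith
  · have hxd : x ≤ d := le_trans hxy hyd
    have hyc : c ≤ y := le_trans hx hxy
    rw [if_neg (not_lt.mpr hx), if_neg (not_lt.mpr hyc), if_pos hyd, if_pos hxd]
    have := key y x
    rw [abs_of_nonneg (by linarith : (0:ℝ) ≤ y - x)] at this
    linarith

lemma penExt_neg {f : ℝ → ℝ} {c d M x : ℝ} (hcd : c ≤ d) :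
    penExt (fun y => f (-y)) (-d) (-c) M (-x) = penExt f c d M x := by
  unfold penExt
  rcases lt_or_ge x c with h | h
  · rw [if_neg (by push_neg; linarith), if_neg (by push_neg; linarith),
      if_pos h]
    simp only [neg_neg]; ring
  · rcases le_or_gt x d with h2 | h2
    · rw [if_neg (by push_neg; linarith), if_pos (by linarith),
        if_neg (not_lt.mpr h), if_pos h2]
      simp only [neg_neg]
    · rw [if_pos (by linarith), if_neg (not_lt.mpr h), if_neg (not_le.mpr h2)]
      simp only [neg_neg]; ring

lemma feas_neg {n m : ℕ} {σ : ℕ → ℕ} {a b : ℕ → ℝ} {B : ℝ} {x : ℕ → ℝ}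
    (h : FeasibleRAPNC n m σ a b B x) :
    FeasibleRAPNC n m σ (fun l => -(b l)) (fun l => -(a l)) (-B) (fun k => -(x k)) := by
  obtain ⟨h1, h2⟩ := h
  constructor
  · intro i hi1 hi2
    obtain ⟨ha, hb⟩ := h1 i hi1 hi2
    rw [Finset.sum_neg_distrib]
    exact ⟨neg_le_neg hb, neg_le_neg ha⟩
  · rw [Finset.sum_neg_distrib, h2]

lemma exchange_contra
    (n m : ℕ) (σ : ℕ → ℕ) (a b : ℕ → ℝ) (B : ℝ)
    (f : ℕ → ℝ → ℝ) (c d : ℕ → ℝ) (M M' : ℝ) (hM : M' < M)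
    (hlip : ∀ i, ∀ x y : ℝ, |f i x - f i y| ≤ M' * |x - y|)
    (xstar : ℕ → ℝ)
    (hopt : ∀ x : ℕ → ℝ, FeasibleRAPNC n m σ a b B x →
      ∑ i ∈ Finset.Icc 1 n, penExt (f i) (c i) (d i) M (xstar i) ≤
      ∑ i ∈ Finset.Icc 1 n, penExt (f i) (c i) (d i) M (x i))
    (i j : ℕ) (hi1 : 1 ≤ i) (hin : i ≤ n) (hj1 : 1 ≤ j) (hjn : j ≤ n) (hij : i ≠ j)
    (ε : ℝ) (hε : 0 < ε)
    (hεi : ε ≤ xstar i - d i) (hci : c i ≤ d i)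
    (hεj : xstar j + ε ≤ d j)
    (hfeas' : FeasibleRAPNC n m σ a b B
        (fun k => xstar k + (if k = i then -ε else 0) + (if k = j then ε else 0))) :
    False := by
  classical
  set x' : ℕ → ℝ := fun k => xstar k + (if k = i then -ε else 0) + (if k = j then ε else 0)
    with hx'
  have hsub : ({i, j} : Finset ℕ) ⊆ Finset.Icc 1 n := by
    intro k hk
    simp only [Finset.mem_insert, Finset.mem_singleton] at hk
    rcases hk with rfl | rfl <;> simp [Finset.mem_Icc] <;> omega
  have hdiff :
      ∑ k ∈ Finset.Icc 1 n, penExt (f k) (c k) (d k) M (x' k)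
        - ∑ k ∈ Finset.Icc 1 n, penExt (f k) (c k) (d k) M (xstar k)
      = ∑ k ∈ ({i, j} : Finset ℕ),
          (penExt (f k) (c k) (d k) M (x' k) - penExt (f k) (c k) (d k) M (xstar k)) := by
    rw [← Finset.sum_sub_distrib]
    refine (Finset.sum_subset hsub ?_).symm
    intro k _ hk
    simp only [Finset.mem_insert, Finset.mem_singleton, not_or] at hk
    have : x' k = xstar k := by simp [hx', hk.1, hk.2]
    rw [this]; ring
  have hxi : x' i = xstar i - ε := by simp [hx', hij]; ring
  have hxj : x' j = xstar j + ε := by simp [hx', Ne.symm hij]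
  have hti : penExt (f i) (c i) (d i) M (x' i) - penExt (f i) (c i) (d i) M (xstar i)
      = -(M * ε) := by
    rw [hxi, penExt_of_ge hci (by linarith), penExt_of_ge hci (by linarith)]
    ring
  have htj : penExt (f j) (c j) (d j) M (x' j) - penExt (f j) (c j) (d j) M (xstar j)
      ≤ M' * ε := by
    rw [hxj]
    have := penExt_incr_le (c := c j) hM (hlip j) (by linarith : xstar j ≤ xstar j + ε)
      (by linarith : xstar j + ε ≤ d j)
    simpa using this
  have hpair : ∑ k ∈ ({i, j} : Finset ℕ),
      (penExt (f k) (c k) (d k) M (x' k) - penExt (f k) (c k) (d k) M (xstar k))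
      = (penExt (f i) (c i) (d i) M (x' i) - penExt (f i) (c i) (d i) M (xstar i))
        + (penExt (f j) (c j) (d j) M (x' j) - penExt (f j) (c j) (d j) M (xstar j)) :=
    Finset.sum_pair hij
  have hle := hopt x' hfeas'
  have h1 : (0:ℝ) ≤ ∑ k ∈ Finset.Icc 1 n, penExt (f k) (c k) (d k) M (x' k)
      - ∑ k ∈ Finset.Icc 1 n, penExt (f k) (c k) (d k) M (xstar k) := by linarith
  rw [hdiff, hpair, hti] at h1
  nlinarith [htj]

lemma upper_bound
    (n m : ℕ) (σ : ℕ → ℕ) (hσmono : ∀ i j, i ≤ j → j ≤ m → σ i ≤ σ j)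
    (hσ0 : σ 0 = 0) (hσm : σ m = n)
    (a b : ℕ → ℝ) (B : ℝ) (f : ℕ → ℝ → ℝ) (c d : ℕ → ℝ) (M M' : ℝ) (hM : M' < M)
    (hlip : ∀ i, ∀ x y : ℝ, |f i x - f i y| ≤ M' * |x - y|)
    (x0 : ℕ → ℝ) (hx0 : FeasibleRAPNC n m σ a b B x0)
    (hx0bd : ∀ i, 1 ≤ i → i ≤ n → c i ≤ x0 i ∧ x0 i ≤ d i)
    (xstar : ℕ → ℝ) (hxstar : FeasibleRAPNC n m σ a b B xstar)
    (hopt : ∀ x : ℕ → ℝ, FeasibleRAPNC n m σ a b B x →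
      ∑ i ∈ Finset.Icc 1 n, penExt (f i) (c i) (d i) M (xstar i) ≤
      ∑ i ∈ Finset.Icc 1 n, penExt (f i) (c i) (d i) M (x i)) :
    ∀ i, 1 ≤ i → i ≤ n → xstar i ≤ d i := by
  classical
  by_contra hcon
  push_neg at hcon
  obtain ⟨i, hi1, hin, hdi⟩ := hcon
  set S : ℕ → ℝ := fun l => ∑ k ∈ Finset.Icc 1 (σ l), xstar k with hS
  set S0 : ℕ → ℝ := fun l => ∑ k ∈ Finset.Icc 1 (σ l), x0 k with hS0
  have hSa : ∀ l, 1 ≤ l → l ≤ m - 1 → a l ≤ S l ∧ S l ≤ b l := hxstar.1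
  have hS0a : ∀ l, 1 ≤ l → l ≤ m - 1 → a l ≤ S0 l ∧ S0 l ≤ b l := hx0.1
  have hSm : S m = B := by
    show ∑ k ∈ Finset.Icc 1 (σ m), xstar k = B
    rw [hσm]; exact hxstar.2
  have hS0m : S0 m = B := by
    show ∑ k ∈ Finset.Icc 1 (σ m), x0 k = B
    rw [hσm]; exact hx0.2
  -- l₁ : least l with i ≤ σ l
  have hex : ∃ l, i ≤ σ l := ⟨m, by rw [hσm]; exact hin⟩
  set l₁ := Nat.find hex with hl₁def
  have hl₁ : i ≤ σ l₁ := Nat.find_spec hex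
  have hl₁min : ∀ l, l < l₁ → σ l < i := fun l hl => not_le.mp (Nat.find_min hex hl)
  have hl₁m : l₁ ≤ m := Nat.find_min' hex (by rw [hσm]; exact hin)
  have hl₁pos : 1 ≤ l₁ := by
    rcases Nat.eq_zero_or_pos l₁ with h | h
    · rw [h, hσ0] at hl₁; omega
    · exact h
  -- L : least l ≥ l₁ with S l ≤ S0 l
  have hexL : ∃ l, l₁ ≤ l ∧ S l ≤ S0 l := ⟨m, hl₁m, by rw [hSm, hS0m]⟩
  set L := Nat.find hexL with hLdef
  obtain ⟨hl₁L, hSL⟩ := Nat.find_spec hexL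
  have hLm : L ≤ m := Nat.find_min' hexL ⟨hl₁m, by rw [hSm, hS0m]⟩
  have hLmin : ∀ l, l₁ ≤ l → l < L → S0 l < S l := by
    intro l h1 h2
    have h3 := Nat.find_min hexL h2
    push_neg at h3
    exact h3 h1
  -- K : greatest l ≤ l₁ - 1 with S0 l ≤ S l
  set K := Nat.findGreatest (fun l => S0 l ≤ S l) (l₁ - 1) with hKdef
  have hP0 : S0 0 ≤ S 0 := by
    show ∑ k ∈ Finset.Icc 1 (σ 0), x0 k ≤ ∑ k ∈ Finset.Icc 1 (σ 0), xstar k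
    rw [hσ0]; simp
  have hK : S0 K ≤ S K := Nat.findGreatest_spec (P := fun l => S0 l ≤ S l) (Nat.zero_le _) hP0
  have hKle : K ≤ l₁ - 1 := Nat.findGreatest_le (l₁ - 1)
  have hKmax : ∀ l, K < l → l ≤ l₁ - 1 → S l < S0 l := fun l h1 h2 =>
    not_le.mp (Nat.findGreatest_is_greatest (P := fun l => S0 l ≤ S l) h1 h2)
  have hKm : K ≤ m := le_trans hKle (by omega)
  have hσK : σ K < i :=
    lt_of_le_of_lt (hσmono K (l₁ - 1) hKle (by omega)) (hl₁min (l₁ - 1) (by omega))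
  have hσL : i ≤ σ L := le_trans hl₁ (hσmono l₁ L hl₁L hLm)
  have hσKL : σ K ≤ σ L := by omega
  have hσLn : σ L ≤ n := by rw [← hσm]; exact hσmono L m hLm le_rfl
  -- key inequality on the interval (σ K, σ L]
  have e : ∀ (t : ℕ) (g : ℕ → ℝ), ∑ k ∈ Finset.Icc 1 t, g k = ∑ k ∈ Finset.Ioc 0 t, g k :=
    fun t g => by rw [← Finset.Icc_add_one_left_eq_Ioc]; rfl
  have hsplit : ∑ k ∈ Finset.Ioc (σ K) (σ L), (xstar k - x0 k)
      = (S L - S0 L) - (S K - S0 K) := by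
    have h1 := Finset.sum_Ioc_consecutive xstar (Nat.zero_le (σ K)) hσKL
    have h2 := Finset.sum_Ioc_consecutive x0 (Nat.zero_le (σ K)) hσKL
    have hSL' : S L = ∑ k ∈ Finset.Ioc 0 (σ L), xstar k := e _ _
    have hSK' : S K = ∑ k ∈ Finset.Ioc 0 (σ K), xstar k := e _ _
    have hS0L' : S0 L = ∑ k ∈ Finset.Ioc 0 (σ L), x0 k := e _ _
    have hS0K' : S0 K = ∑ k ∈ Finset.Ioc 0 (σ K), x0 k := e _ _
    rw [Finset.sum_sub_distrib, hSL', hSK', hS0L', hS0K']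
    linarith
  have hkey : ∑ k ∈ Finset.Ioc (σ K) (σ L), (xstar k - x0 k) ≤ 0 := by
    rw [hsplit]; linarith
  have hiMem : i ∈ Finset.Ioc (σ K) (σ L) := Finset.mem_Ioc.mpr ⟨hσK, hσL⟩
  have hx0i := hx0bd i hi1 hin
  -- find j with xstar j < x0 j
  have hjex : ∃ j ∈ Finset.Ioc (σ K) (σ L), j ≠ i ∧ xstar j < x0 j := by
    by_contra hno
    push_neg at hno
    have hpos : ∀ k ∈ Finset.Ioc (σ K) (σ L),
        (if k = i then xstar i - x0 i else 0) ≤ xstar k - x0 k := by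
      intro k hk
      by_cases hki : k = i
      · subst hki; simp
      · rw [if_neg hki]
        linarith [hno k hk hki]
    have h1 : xstar i - x0 i ≤ ∑ k ∈ Finset.Ioc (σ K) (σ L), (xstar k - x0 k) := by
      calc xstar i - x0 i
          = ∑ k ∈ Finset.Ioc (σ K) (σ L), (if k = i then xstar i - x0 i else 0) := by
            rw [Finset.sum_ite_eq' _ i (fun _ => xstar i - x0 i), if_pos hiMem]
        _ ≤ _ := Finset.sum_le_sum hpos
    linarith [hx0i.2]
  obtain ⟨j, hjmem, hjne, hjlt⟩ := hjex
  obtain ⟨hjK, hjL⟩ := Finset.mem_Ioc.mp hjmem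
  have hj1 : 1 ≤ j := by omega
  have hjn : j ≤ n := le_trans hjL hσLn
  have hx0j := hx0bd j hj1 hjn
  have hci : c i ≤ d i := le_trans hx0i.1 hx0i.2
  -- sum formula for the perturbed vector
  have hsum : ∀ (ε : ℝ) (N : ℕ),
      ∑ k ∈ Finset.Icc 1 N,
        (xstar k + (if k = i then -ε else 0) + (if k = j then ε else 0))
      = (∑ k ∈ Finset.Icc 1 N, xstar k)
        + (if i ∈ Finset.Icc 1 N then -ε else 0)
        + (if j ∈ Finset.Icc 1 N then ε else 0) := by
    intro ε N
    rw [Finset.sum_add_distrib, Finset.sum_add_distrib,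
      Finset.sum_ite_eq' (Finset.Icc 1 N) i (fun _ => -ε),
      Finset.sum_ite_eq' (Finset.Icc 1 N) j (fun _ => ε)]
  rcases lt_or_gt_of_ne hjne with hji | hji
  · -- j < i : move ε from i to j, prefix sums for σ l ∈ [j, i-1] increase
    set T := (Finset.Icc 1 (m - 1)).filter (fun l => j ≤ σ l ∧ σ l < i) with hT
    have hTslack : ∀ l ∈ T, S l < b l := by
      intro l hl
      rw [hT, Finset.mem_filter, Finset.mem_Icc] at hl
      obtain ⟨⟨hl1, hl2⟩, hσl1, hσl2⟩ := hl
      have hll₁ : l < l₁ := by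
        by_contra h
        push_neg at h
        have : σ l₁ ≤ σ l := hσmono l₁ l h (by omega)
        omega
      have hKl : K < l := by
        by_contra h
        push_neg at h
        have : σ l ≤ σ K := hσmono l K h hKm
        omega
      have h1 := hKmax l hKl (by omega)
      have h2 := (hS0a l hl1 hl2).2
      linarith
    set E := insert (xstar i - d i)
      (insert (x0 j - xstar j) (T.image (fun l => b l - S l))) with hE
    have hEne : E.Nonempty := ⟨_, Finset.mem_insert_self _ _⟩
    set ε := E.min' hEne with hεdef
    have hεpos : 0 < ε := by
      have hall : ∀ r ∈ E, 0 < r := by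
        intro r hr
        rw [hE] at hr
        simp only [Finset.mem_insert, Finset.mem_image] at hr
        rcases hr with rfl | rfl | ⟨l, hl, rfl⟩
        · linarith
        · linarith
        · linarith [hTslack l hl]
      exact hall ε (E.min'_mem hEne)
    have hεi : ε ≤ xstar i - d i := Finset.min'_le _ _ (by rw [hE]; exact Finset.mem_insert_self _ _)
    have hεj : ε ≤ x0 j - xstar j := Finset.min'_le _ _ (by
      rw [hE]; exact Finset.mem_insert_of_mem (Finset.mem_insert_self _ _))
    have hfeas' : FeasibleRAPNC n m σ a b B
        (fun k => xstar k + (if k = i then -ε else 0) + (if k = j then ε else 0)) := by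
      constructor
      · intro l hl1 hl2
        have hbnd := hSa l hl1 hl2
        rw [hsum ε (σ l)]
        by_cases h1 : i ≤ σ l
        · have h2 : j ≤ σ l := by omega
          rw [if_pos (Finset.mem_Icc.mpr ⟨hi1, h1⟩), if_pos (Finset.mem_Icc.mpr ⟨hj1, h2⟩)]
          constructor <;> [linarith [hbnd.1]; linarith [hbnd.2]]
        · by_cases h2 : j ≤ σ l
          · -- j ≤ σ l < i : l ∈ T
            have hlT : l ∈ T := by
              rw [hT, Finset.mem_filter, Finset.mem_Icc]
              exact ⟨⟨hl1, hl2⟩, h2, by omega⟩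
            have hεT : ε ≤ b l - S l := Finset.min'_le _ _ (by
              rw [hE]
              refine Finset.mem_insert_of_mem (Finset.mem_insert_of_mem ?_)
              exact Finset.mem_image.mpr ⟨l, hlT, rfl⟩)
            rw [if_neg (by rw [Finset.mem_Icc]; omega), if_pos (Finset.mem_Icc.mpr ⟨hj1, h2⟩)]
            constructor <;> [linarith [hbnd.1]; linarith [hbnd.2]]
          · rw [if_neg (by rw [Finset.mem_Icc]; omega), if_neg (by rw [Finset.mem_Icc]; omega)]
            constructor <;> [linarith [hbnd.1]; linarith [hbnd.2]]
      · rw [hsum ε n, if_pos (Finset.mem_Icc.mpr ⟨hi1, hin⟩), if_pos (Finset.mem_Icc.mpr ⟨hj1, hjn⟩)]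
        have := hxstar.2
        linarith
    exact exchange_contra n m σ a b B f c d M M' hM hlip xstar hopt i j hi1 hin hj1 hjn
      (Ne.symm hjne) ε hεpos hεi hci (by linarith [hx0j.2]) hfeas'
  · -- i < j : move ε from i to j, prefix sums for σ l ∈ [i, j-1] decrease
    set T := (Finset.Icc 1 (m - 1)).filter (fun l => i ≤ σ l ∧ σ l < j) with hT
    have hTslack : ∀ l ∈ T, a l < S l := by
      intro l hl
      rw [hT, Finset.mem_filter, Finset.mem_Icc] at hl
      obtain ⟨⟨hl1, hl2⟩, hσl1, hσl2⟩ := hl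
      have hll₁ : l₁ ≤ l := by
        by_contra h
        push_neg at h
        have := hl₁min l h
        omega
      have hlL : l < L := by
        by_contra h
        push_neg at h
        have : σ L ≤ σ l := hσmono L l h (by omega)
        omega
      have h1 := hLmin l hll₁ hlL
      have h2 := (hS0a l hl1 hl2).1
      linarith
    set E := insert (xstar i - d i)
      (insert (x0 j - xstar j) (T.image (fun l => S l - a l))) with hE
    have hEne : E.Nonempty := ⟨_, Finset.mem_insert_self _ _⟩
    set ε := E.min' hEne with hεdef
    have hεpos : 0 < ε := by
      have hall : ∀ r ∈ E, 0 < r := by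
        intro r hr
        rw [hE] at hr
        simp only [Finset.mem_insert, Finset.mem_image] at hr
        rcases hr with rfl | rfl | ⟨l, hl, rfl⟩
        · linarith
        · linarith
        · linarith [hTslack l hl]
      exact hall ε (E.min'_mem hEne)
    have hεi : ε ≤ xstar i - d i := Finset.min'_le _ _ (by rw [hE]; exact Finset.mem_insert_self _ _)
    have hεj : ε ≤ x0 j - xstar j := Finset.min'_le _ _ (by
      rw [hE]; exact Finset.mem_insert_of_mem (Finset.mem_insert_self _ _))
    have hfeas' : FeasibleRAPNC n m σ a b B
        (fun k => xstar k + (if k = i then -ε else 0) + (if k = j then ε else 0)) := by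
      constructor
      · intro l hl1 hl2
        have hbnd := hSa l hl1 hl2
        rw [hsum ε (σ l)]
        by_cases h2 : j ≤ σ l
        · have h1 : i ≤ σ l := by omega
          rw [if_pos (Finset.mem_Icc.mpr ⟨hi1, h1⟩), if_pos (Finset.mem_Icc.mpr ⟨hj1, h2⟩)]
          constructor <;> [linarith [hbnd.1]; linarith [hbnd.2]]
        · by_cases h1 : i ≤ σ l
          · -- i ≤ σ l < j : l ∈ T
            have hlT : l ∈ T := by
              rw [hT, Finset.mem_filter, Finset.mem_Icc]
              exact ⟨⟨hl1, hl2⟩, h1, by omega⟩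
            have hεT : ε ≤ S l - a l := Finset.min'_le _ _ (by
              rw [hE]
              refine Finset.mem_insert_of_mem (Finset.mem_insert_of_mem ?_)
              exact Finset.mem_image.mpr ⟨l, hlT, rfl⟩)
            rw [if_pos (Finset.mem_Icc.mpr ⟨hi1, h1⟩), if_neg (by rw [Finset.mem_Icc]; omega)]
            constructor <;> [linarith [hbnd.1]; linarith [hbnd.2]]
          · rw [if_neg (by rw [Finset.mem_Icc]; omega), if_neg (by rw [Finset.mem_Icc]; omega)]
            constructor <;> [linarith [hbnd.1]; linarith [hbnd.2]]
      · rw [hsum ε n, if_pos (Finset.mem_Icc.mpr ⟨hi1, hin⟩), if_pos (Finset.mem_Icc.mpr ⟨hj1, hjn⟩)]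
        have := hxstar.2
        linarith
    exact exchange_contra n m σ a b B f c d M M' hM hlip xstar hopt i j hi1 hin hj1 hjn
      (Ne.symm hjne) ε hεpos hεi hci (by linarith [hx0j.2]) hfeas'

theorem stmt_7 (n m : ℕ) (hn : 0 < n) (hm : 0 < m)
    (σ : ℕ → ℕ) (hσmono : ∀ i j, i ≤ j → j ≤ m → σ i ≤ σ j)
    (hσ0 : σ 0 = 0) (hσm : σ m = n)
    (a b : ℕ → ℝ) (hab : ∀ i, 1 ≤ i → i ≤ m - 1 → a i ≤ b i)
    (B : ℝ) (f : ℕ → ℝ → ℝ) (c d : ℕ → ℝ) (M M' : ℝ) (hM : M' < M)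
    (hconv : ∀ i, ConvexOn ℝ Set.univ (f i))
    (hlip : ∀ i, ∀ x y : ℝ, |f i x - f i y| ≤ M' * |x - y|)
    -- there is a feasible solution within the bounds [c_i, d_i]
    (x0 : ℕ → ℝ) (hx0 : FeasibleRAPNC n m σ a b B x0)
    (hx0bd : ∀ i, 1 ≤ i → i ≤ n → c i ≤ x0 i ∧ x0 i ≤ d i)
    -- x* is an optimal solution of the penalized problem
    (xstar : ℕ → ℝ) (hxstar : FeasibleRAPNC n m σ a b B xstar)
    (hopt : ∀ x : ℕ → ℝ, FeasibleRAPNC n m σ a b B x →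
      ∑ i ∈ Finset.Icc 1 n, penExt (f i) (c i) (d i) M (xstar i) ≤
      ∑ i ∈ Finset.Icc 1 n, penExt (f i) (c i) (d i) M (x i)) :
    ∀ i, 1 ≤ i → i ≤ n → c i ≤ xstar i ∧ xstar i ≤ d i := by
  intro i hi1 hin
  have hupper := upper_bound n m σ hσmono hσ0 hσm a b B f c d M M' hM hlip
    x0 hx0 hx0bd xstar hxstar hopt
  refine ⟨?_, hupper i hi1 hin⟩
  -- lower bound via the negation symmetry
  have hcd : ∀ k, 1 ≤ k → k ≤ n → c k ≤ d k := fun k h1 h2 =>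
    le_trans (hx0bd k h1 h2).1 (hx0bd k h1 h2).2
  have hlip' : ∀ k, ∀ x y : ℝ, |f k (-x) - f k (-y)| ≤ M' * |x - y| := by
    intro k x y
    have h := hlip k (-x) (-y)
    rwa [show -x - -y = -(x - y) by ring, abs_neg] at h
  have hopt' : ∀ x : ℕ → ℝ,
      FeasibleRAPNC n m σ (fun l => -(b l)) (fun l => -(a l)) (-B) x →
      ∑ k ∈ Finset.Icc 1 n,
        penExt ((fun k y => f k (-y)) k) ((fun k => -(d k)) k) ((fun k => -(c k)) k) M
          ((fun k => -(xstar k)) k) ≤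
      ∑ k ∈ Finset.Icc 1 n,
        penExt ((fun k y => f k (-y)) k) ((fun k => -(d k)) k) ((fun k => -(c k)) k) M (x k) := by
    intro x hx
    have hz : FeasibleRAPNC n m σ a b B (fun k => -(x k)) := by
      have h := feas_neg hx
      simpa using h
    have eL : ∀ k ∈ Finset.Icc 1 n,
        penExt (fun y => f k (-y)) (-(d k)) (-(c k)) M (-(xstar k))
          = penExt (f k) (c k) (d k) M (xstar k) := by
      intro k hk
      rw [Finset.mem_Icc] at hk
      exact penExt_neg (hcd k hk.1 hk.2)
    have eR : ∀ k ∈ Finset.Icc 1 n,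
        penExt (fun y => f k (-y)) (-(d k)) (-(c k)) M (x k)
          = penExt (f k) (c k) (d k) M (-(x k)) := by
      intro k hk
      rw [Finset.mem_Icc] at hk
      have h := penExt_neg (f := f k) (M := M) (x := -(x k)) (hcd k hk.1 hk.2)
      rwa [neg_neg] at h
    simp only
    rw [Finset.sum_congr rfl eL, Finset.sum_congr rfl eR]
    exact hopt _ hz
  have hlow := upper_bound n m σ hσmono hσ0 hσm (fun l => -(b l)) (fun l => -(a l)) (-B)
    (fun k y => f k (-y)) (fun k => -(d k)) (fun k => -(c k)) M M' hM hlip'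
    (fun k => -(x0 k)) (feas_neg hx0)
    (fun k h1 h2 => ⟨neg_le_neg (hx0bd k h1 h2).2, neg_le_neg (hx0bd k h1 h2).1⟩)
    (fun k => -(xstar k)) (feas_neg hxstar) hopt'
  have := hlow i hi1 hin
  linarith
end

section
/- Consider minimizing a separable piecewise-linear convex objective f^pl(x) = Σ_{i=1}^n f^pl_i(x_i), where each f^pl_i is the integer-breakpoint interpolation of a convex function f_i, over the polytope P = {x ∈ ℝ^n : a_i ≤ Σ_{k=1}^{σ(i)} x_k ≤ b_i for i < m, Σ_{k=1}^n x_k = B} with integer data a_i, b_i, B. If x is a feasible point of P with at least one non-integer coordinate, then there exists a feasible x' ∈ P with f^pl(x') ≤ f^pl(x) and strictly fewer non-integer coordinates. -/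
open Finset

/-- Membership in the RAP-NC polytope with integer data. -/
def MemRAPNC (n m : ℕ) (σ : ℕ → ℕ) (a b : ℕ → ℤ) (B : ℤ) (x : ℕ → ℝ) : Prop :=
  (∀ i, 1 ≤ i → i ≤ m - 1 →
      (a i : ℝ) ≤ ∑ k ∈ Finset.Icc 1 (σ i), x k ∧
      ∑ k ∈ Finset.Icc 1 (σ i), x k ≤ (b i : ℝ)) ∧
  ∑ k ∈ Finset.Icc 1 n, x k = (B : ℝ)

-- Number of non-integer coordinates of `x` among indices 1..n
open Classical in
noncomputable def nonIntegerCount (n : ℕ) (x : ℕ → ℝ) : ℕ :=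
  ((Finset.Icc 1 n).filter (fun i => ¬ ∃ z : ℤ, x i = (z : ℝ))).card

private lemma sum_int_of_int {s : Finset ℕ} {x : ℕ → ℝ}
    (h : ∀ k ∈ s, ∃ z : ℤ, x k = (z : ℝ)) : ∃ z : ℤ, ∑ k ∈ s, x k = (z : ℝ) := by
  classical
  refine Finset.sum_induction x (fun r => ∃ z : ℤ, r = (z : ℝ)) ?_ ?_ h
  · rintro u v ⟨zu, rfl⟩ ⟨zv, rfl⟩; exact ⟨zu + zv, by push_cast; ring⟩
  · exact ⟨0, by simp⟩

private lemma fpl_eq (f : ℝ → ℝ) (l : ℤ) (t : ℝ) (h1 : (l : ℝ) ≤ t) (h2 : t ≤ (l : ℝ) + 1) :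
    fpl f t = f l + (t - l) * (f ((l : ℝ) + 1) - f l) := by
  rcases eq_or_lt_of_le h2 with h | h
  · have hc : ((l : ℝ) + 1) = ((l + 1 : ℤ) : ℝ) := by push_cast; ring
    rw [h, hc]
    simp [fpl]
  · have hfl : ⌊t⌋ = l := Int.floor_eq_iff.mpr ⟨h1, by exact_mod_cast h⟩
    rcases eq_or_lt_of_le h1 with h3 | h3
    · rw [← h3]
      simp [fpl]
    · have hcl : ⌈t⌉ = l + 1 := by
        apply Int.ceil_eq_iff.mpr
        constructor
        · push_cast; linarith
        · push_cast; linarith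
      unfold fpl
      rw [hfl, hcl]
      push_cast
      ring

private lemma sum_update (x : ℕ → ℝ) (i j : ℕ) (δ : ℝ) (hij : i ≠ j) (s : Finset ℕ) :
    ∑ k ∈ s, (if k = i then x i + δ else if k = j then x j - δ else x k)
      = ∑ k ∈ s, x k + (if i ∈ s then δ else 0) + (if j ∈ s then -δ else 0) := by
  classical
  have hpt : ∀ k, (if k = i then x i + δ else if k = j then x j - δ else x k)
      = x k + ((if k = i then δ else 0) + (if k = j then -δ else 0)) := by
    intro k
    by_cases h1 : k = i
    · subst h1; simp [hij]
    · by_cases h2 : k = j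
      · subst h2; simp [h1]; ring
      · simp [h1, h2]
  simp_rw [hpt, Finset.sum_add_distrib,
    Finset.sum_ite_eq' s i (fun _ => δ), Finset.sum_ite_eq' s j (fun _ => -δ)]
  ring

private lemma sum_diff_two {g h : ℕ → ℝ} {s : Finset ℕ} {i j : ℕ} (hij : i ≠ j)
    (hi : i ∈ s) (hj : j ∈ s) (hk : ∀ k ∈ s, k ≠ i → k ≠ j → g k = h k) :
    ∑ k ∈ s, g k = ∑ k ∈ s, h k + ((g i - h i) + (g j - h j)) := by
  classical
  have h1 : ∑ k ∈ s, (g k - h k) = (g i - h i) + (g j - h j) := by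
    rw [show g i - h i + (g j - h j) = ∑ k ∈ ({i, j} : Finset ℕ), (g k - h k) by
      rw [Finset.sum_pair hij]]
    refine (Finset.sum_subset ?_ ?_).symm
    · intro k hk'
      rcases Finset.mem_insert.mp hk' with rfl | hk''
      · exact hi
      · rw [Finset.mem_singleton] at hk''; subst hk''; exact hj
    · intro k hks hknot
      have hne1 : k ≠ i := fun h => hknot (by simp [h])
      have hne2 : k ≠ j := fun h => hknot (by simp [h])
      simp [hk k hks hne1 hne2]
  have h2 : ∑ k ∈ s, (g k - h k) = ∑ k ∈ s, g k - ∑ k ∈ s, h k :=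
    Finset.sum_sub_distrib _ _
  linarith

private lemma key (n m : ℕ) (σ : ℕ → ℕ) (a b : ℕ → ℤ) (B : ℤ) (f : ℕ → ℝ → ℝ)
    (x : ℕ → ℝ) (hx : MemRAPNC n m σ a b B x)
    (i j : ℕ) (hi1 : 1 ≤ i) (hin : i ≤ n) (hj1 : 1 ≤ j) (hjn : j ≤ n)
    (hij : i < j)
    (hni : ¬ ∃ z : ℤ, x i = (z : ℝ)) (hnj : ¬ ∃ z : ℤ, x j = (z : ℝ))
    (hmid : ∀ k, 1 ≤ k → k ≤ n → k ≠ i → k < j → ∃ z : ℤ, x k = (z : ℝ))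
    (δ : ℝ)
    (hb1 : (⌊x i⌋ : ℝ) ≤ x i + δ) (hb2 : x i + δ ≤ (⌊x i⌋ : ℝ) + 1)
    (hb3 : (⌊x j⌋ : ℝ) ≤ x j - δ) (hb4 : x j - δ ≤ (⌊x j⌋ : ℝ) + 1)
    (hint : (∃ z : ℤ, x i + δ = (z : ℝ)) ∨ (∃ z : ℤ, x j - δ = (z : ℝ)))
    (hslope : δ * ((f i ((⌊x i⌋ : ℝ) + 1) - f i (⌊x i⌋ : ℝ))
        - (f j ((⌊x j⌋ : ℝ) + 1) - f j (⌊x j⌋ : ℝ))) ≤ 0) :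
    ∃ x' : ℕ → ℝ, MemRAPNC n m σ a b B x' ∧
      ∑ k ∈ Finset.Icc 1 n, fpl (f k) (x' k) ≤ ∑ k ∈ Finset.Icc 1 n, fpl (f k) (x k) ∧
      nonIntegerCount n x' < nonIntegerCount n x := by
  classical
  set x' : ℕ → ℝ := fun k => if k = i then x i + δ else if k = j then x j - δ else x k with hx'
  have hx'i : x' i = x i + δ := by simp [hx']
  have hx'j : x' j = x j - δ := by simp [hx', hij.ne']
  have hx'k : ∀ k, k ≠ i → k ≠ j → x' k = x k := by
    intro k h1 h2; simp [hx', h1, h2]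
  have hsum : ∀ s : Finset ℕ, ∑ k ∈ s, x' k
      = ∑ k ∈ s, x k + (if i ∈ s then δ else 0) + (if j ∈ s then -δ else 0) :=
    sum_update x i j δ hij.ne
  have hIi : i ∈ Finset.Icc 1 n := Finset.mem_Icc.mpr ⟨hi1, hin⟩
  have hIj : j ∈ Finset.Icc 1 n := Finset.mem_Icc.mpr ⟨hj1, hjn⟩
  have hfloor_lt : (⌊x i⌋ : ℝ) < x i :=
    lt_of_le_of_ne (Int.floor_le _) (fun h => hni ⟨⌊x i⌋, h.symm⟩)
  refine ⟨x', ⟨?_, ?_⟩, ?_, ?_⟩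
  · -- interval constraints
    intro l hl1 hl2
    obtain ⟨ha, hb⟩ := hx.1 l hl1 hl2
    have hs := hsum (Finset.Icc 1 (σ l))
    by_cases hjs : j ≤ σ l
    · have his : i ≤ σ l := le_trans hij.le hjs
      rw [hs, if_pos (Finset.mem_Icc.mpr ⟨hi1, his⟩), if_pos (Finset.mem_Icc.mpr ⟨hj1, hjs⟩)]
      constructor <;> linarith
    · by_cases his : i ≤ σ l
      · rw [hs, if_pos (Finset.mem_Icc.mpr ⟨hi1, his⟩),
          if_neg (fun hmem => hjs (Finset.mem_Icc.mp hmem).2)]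
        push_neg at hjs
        obtain ⟨z, hz⟩ : ∃ z : ℤ, ∑ k ∈ (Finset.Icc 1 (σ l)).erase i, x k = (z : ℝ) := by
          apply sum_int_of_int
          intro k hk
          obtain ⟨hkne, hkmem⟩ := Finset.mem_erase.mp hk
          obtain ⟨hk1, hk2⟩ := Finset.mem_Icc.mp hkmem
          exact hmid k hk1 (le_trans (le_of_lt (lt_of_le_of_lt hk2 hjs)) hjn)
            hkne (lt_of_le_of_lt hk2 hjs)
        have hsplit : x i + ∑ k ∈ (Finset.Icc 1 (σ l)).erase i, x k
            = ∑ k ∈ Finset.Icc 1 (σ l), x k :=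
          Finset.add_sum_erase _ x (Finset.mem_Icc.mpr ⟨hi1, his⟩)
        have h0 : ((a l - z : ℤ) : ℝ) ≤ x i := by push_cast; linarith
        have hfl1 : a l - z ≤ ⌊x i⌋ := Int.le_floor.mpr h0
        have hfl2 : ⌊x i⌋ < b l - z := by
          have : (⌊x i⌋ : ℝ) < ((b l - z : ℤ) : ℝ) := by push_cast; linarith
          exact_mod_cast this
        constructor
        · have hc := (Int.cast_le (R := ℝ)).mpr hfl1
          push_cast at hc
          linarith
        · have hc := (Int.cast_le (R := ℝ)).mpr (Int.add_one_le_iff.mpr hfl2)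
          push_cast at hc
          linarith
      · rw [hs, if_neg (fun hmem => his (Finset.mem_Icc.mp hmem).2),
          if_neg (fun hmem => hjs (Finset.mem_Icc.mp hmem).2)]
        constructor <;> linarith
  · -- total sum
    rw [hsum (Finset.Icc 1 n), if_pos hIi, if_pos hIj]
    have := hx.2
    linarith
  · -- objective
    have heq := sum_diff_two (g := fun k => fpl (f k) (x' k)) (h := fun k => fpl (f k) (x k))
      hij.ne hIi hIj (fun k _ h1 h2 => by beta_reduce; rw [hx'k k h1 h2])
    have e1 : fpl (f i) (x' i) - fpl (f i) (x i)
        = δ * (f i ((⌊x i⌋ : ℝ) + 1) - f i (⌊x i⌋ : ℝ)) := by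
      rw [hx'i, fpl_eq (f i) ⌊x i⌋ (x i + δ) hb1 hb2,
        fpl_eq (f i) ⌊x i⌋ (x i) (Int.floor_le _) (Int.lt_floor_add_one _).le]
      ring
    have e2 : fpl (f j) (x' j) - fpl (f j) (x j)
        = -δ * (f j ((⌊x j⌋ : ℝ) + 1) - f j (⌊x j⌋ : ℝ)) := by
      rw [hx'j, fpl_eq (f j) ⌊x j⌋ (x j - δ) hb3 hb4,
        fpl_eq (f j) ⌊x j⌋ (x j) (Int.floor_le _) (Int.lt_floor_add_one _).le]
      ring
    rw [heq]
    nlinarith [hslope, e1, e2]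
  · -- count decreases
    unfold nonIntegerCount
    apply Finset.card_lt_card
    rw [Finset.ssubset_def]
    constructor
    · intro k hk
      rw [Finset.mem_filter] at hk ⊢
      refine ⟨hk.1, ?_⟩
      by_cases h1 : k = i
      · subst h1; exact hni
      · by_cases h2 : k = j
        · subst h2; exact hnj
        · rw [← hx'k k h1 h2]; exact hk.2
    · intro hcon
      rcases hint with ⟨z, hz⟩ | ⟨z, hz⟩
      · have hiT : i ∈ (Finset.Icc 1 n).filter (fun u => ¬ ∃ z : ℤ, x u = (z : ℝ)) :=
          Finset.mem_filter.mpr ⟨hIi, hni⟩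
        have := Finset.mem_filter.mp (hcon hiT)
        exact this.2 ⟨z, by rw [hx'i]; exact hz⟩
      · have hjT : j ∈ (Finset.Icc 1 n).filter (fun u => ¬ ∃ z : ℤ, x u = (z : ℝ)) :=
          Finset.mem_filter.mpr ⟨hIj, hnj⟩
        have := Finset.mem_filter.mp (hcon hjT)
        exact this.2 ⟨z, by rw [hx'j]; exact hz⟩

theorem stmt_11 (n m : ℕ) (hn : 0 < n) (hm : 0 < m)
    (σ : ℕ → ℕ)
    (hσmono : ∀ i j, 1 ≤ i → i < j → j ≤ m - 1 → σ i < σ j)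
    (hσrange : ∀ i, 1 ≤ i → i ≤ m - 1 → 1 ≤ σ i ∧ σ i ≤ n)
    (a b : ℕ → ℤ) (B : ℤ)
    (f : ℕ → ℝ → ℝ) (hconv : ∀ i, ConvexOn ℝ Set.univ (f i))
    (x : ℕ → ℝ) (hx : MemRAPNC n m σ a b B x)
    (hnonint : 0 < nonIntegerCount n x) :
    ∃ x' : ℕ → ℝ, MemRAPNC n m σ a b B x' ∧
      ∑ i ∈ Finset.Icc 1 n, fpl (f i) (x' i) ≤ ∑ i ∈ Finset.Icc 1 n, fpl (f i) (x i) ∧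
      nonIntegerCount n x' < nonIntegerCount n x := by
  classical
  set T := (Finset.Icc 1 n).filter (fun u => ¬ ∃ z : ℤ, x u = (z : ℝ)) with hT
  have hTcard : 0 < T.card := hnonint
  have hTne : T.Nonempty := Finset.card_pos.mp hTcard
  set i := T.min' hTne with hidef
  have hiT : i ∈ T := T.min'_mem hTne
  have hiIcc : i ∈ Finset.Icc 1 n := (Finset.mem_filter.mp hiT).1
  have hni : ¬ ∃ z : ℤ, x i = (z : ℝ) := (Finset.mem_filter.mp hiT).2
  obtain ⟨hi1, hin⟩ := Finset.mem_Icc.mp hiIcc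
  have hTe : (T.erase i).Nonempty := by
    by_contra hcon
    have hemp : T.erase i = ∅ := Finset.not_nonempty_iff_eq_empty.mp hcon
    have hall : ∀ k ∈ (Finset.Icc 1 n).erase i, ∃ z : ℤ, x k = (z : ℝ) := by
      intro k hk
      by_contra hkne
      have hmem : k ∈ T.erase i :=
        Finset.mem_erase.mpr ⟨(Finset.mem_erase.mp hk).1,
          Finset.mem_filter.mpr ⟨(Finset.mem_erase.mp hk).2, hkne⟩⟩
      rw [hemp] at hmem
      exact absurd hmem (Finset.notMem_empty k)
    obtain ⟨z, hz⟩ := sum_int_of_int hall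
    have hsplit : x i + ∑ k ∈ (Finset.Icc 1 n).erase i, x k = ∑ k ∈ Finset.Icc 1 n, x k :=
      Finset.add_sum_erase _ x hiIcc
    exact hni ⟨B - z, by push_cast; linarith [hx.2]⟩
  set j := (T.erase i).min' hTe with hjdef
  have hjTe : j ∈ T.erase i := Finset.min'_mem _ _
  have hjT : j ∈ T := (Finset.mem_erase.mp hjTe).2
  have hjne : j ≠ i := (Finset.mem_erase.mp hjTe).1
  have hnj : ¬ ∃ z : ℤ, x j = (z : ℝ) := (Finset.mem_filter.mp hjT).2
  obtain ⟨hj1, hjn⟩ := Finset.mem_Icc.mp (Finset.mem_filter.mp hjT).1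
  have hij : i < j := lt_of_le_of_ne (T.min'_le j hjT) (Ne.symm hjne)
  have hmid : ∀ k, 1 ≤ k → k ≤ n → k ≠ i → k < j → ∃ z : ℤ, x k = (z : ℝ) := by
    intro k h1 h2 h3 h4
    by_contra h5
    have hkT : k ∈ T := Finset.mem_filter.mpr ⟨Finset.mem_Icc.mpr ⟨h1, h2⟩, h5⟩
    have : j ≤ k := Finset.min'_le _ _ (Finset.mem_erase.mpr ⟨h3, hkT⟩)
    omega
  have hfli : (⌊x i⌋ : ℝ) < x i :=
    lt_of_le_of_ne (Int.floor_le _) (fun h => hni ⟨⌊x i⌋, h.symm⟩)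
  have hfui : x i < (⌊x i⌋ : ℝ) + 1 := Int.lt_floor_add_one _
  have hflj : (⌊x j⌋ : ℝ) < x j :=
    lt_of_le_of_ne (Int.floor_le _) (fun h => hnj ⟨⌊x j⌋, h.symm⟩)
  have hfuj : x j < (⌊x j⌋ : ℝ) + 1 := Int.lt_floor_add_one _
  rcases le_or_gt ((f i ((⌊x i⌋ : ℝ) + 1) - f i (⌊x i⌋ : ℝ))
      - (f j ((⌊x j⌋ : ℝ) + 1) - f j (⌊x j⌋ : ℝ))) 0 with hc | hc
  · -- slope nonpositive : push δ⁺ > 0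
    set δ := min ((⌊x i⌋ : ℝ) + 1 - x i) (x j - (⌊x j⌋ : ℝ)) with hδ
    have hδ0 : 0 ≤ δ := le_min (by linarith) (by linarith)
    have hδ1 := min_le_left ((⌊x i⌋ : ℝ) + 1 - x i) (x j - (⌊x j⌋ : ℝ))
    have hδ2 := min_le_right ((⌊x i⌋ : ℝ) + 1 - x i) (x j - (⌊x j⌋ : ℝ))
    refine key n m σ a b B f x hx i j hi1 hin hj1 hjn hij hni hnj hmid δ
      (by linarith) (by linarith) (by linarith) (by linarith) ?_ ?_
    · rcases min_choice ((⌊x i⌋ : ℝ) + 1 - x i) (x j - (⌊x j⌋ : ℝ)) with h | h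
      · exact Or.inl ⟨⌊x i⌋ + 1, by rw [hδ, h]; push_cast; ring⟩
      · exact Or.inr ⟨⌊x j⌋, by rw [hδ, h]; ring⟩
    · exact mul_nonpos_iff.mpr (Or.inl ⟨hδ0, hc⟩)
  · -- slope positive : push δ⁻ down
    set δ := -(min (x i - (⌊x i⌋ : ℝ)) ((⌊x j⌋ : ℝ) + 1 - x j)) with hδ
    have hδ0 : 0 ≤ min (x i - (⌊x i⌋ : ℝ)) ((⌊x j⌋ : ℝ) + 1 - x j) :=
      le_min (by linarith) (by linarith)
    have hδ1 := min_le_left (x i - (⌊x i⌋ : ℝ)) ((⌊x j⌋ : ℝ) + 1 - x j)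
    have hδ2 := min_le_right (x i - (⌊x i⌋ : ℝ)) ((⌊x j⌋ : ℝ) + 1 - x j)
    refine key n m σ a b B f x hx i j hi1 hin hj1 hjn hij hni hnj hmid δ
      (by rw [hδ]; linarith) (by rw [hδ]; linarith) (by rw [hδ]; linarith)
      (by rw [hδ]; linarith) ?_ ?_
    · rcases min_choice (x i - (⌊x i⌋ : ℝ)) ((⌊x j⌋ : ℝ) + 1 - x j) with h | h
      · exact Or.inl ⟨⌊x i⌋, by rw [hδ, h]; ring⟩
      · exact Or.inr ⟨⌊x j⌋ + 1, by rw [hδ, h]; push_cast; ring⟩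
    · rw [hδ]
      exact mul_nonpos_iff.mpr (Or.inr ⟨by linarith, hc.le⟩)
end

section
/- Consider the problem of minimizing f^pl(x) = Σ_{i=1}^n f^pl_i(x_i) over the RAP-NC polytope P with integer data (a_i, b_i, B ∈ ℤ), where f^pl_i are convex piecewise-linear with integer breakpoints. If x* is an optimal solution among the integer points of P, then x* is optimal over all of P (i.e., f^pl(x*) ≤ f^pl(x) for every x ∈ P). -/
open Finset

/-- `x` has all coordinates integer. -/
def IsIntegerVec (x : ℕ → ℝ) : Prop := ∀ i, ∃ z : ℤ, x i = (z : ℝ)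

lemma fpl_affine (f : ℝ → ℝ) (c : ℤ) (s : ℝ) (h1 : (c:ℝ) ≤ s) (h2 : s ≤ (c:ℝ) + 1) :
    fpl f s = f c + (s - c) * (f ((c:ℝ)+1) - f c) := by
  rcases eq_or_lt_of_le h2 with h | h
  · have hf : ⌊s⌋ = c + 1 := by rw [h]; exact_mod_cast Int.floor_intCast (c+1)
    have hc : ⌈s⌉ = c + 1 := by rw [h]; exact_mod_cast Int.ceil_intCast (c+1)
    unfold fpl
    rw [hf, hc, h]; push_cast; ring
  · have hf : ⌊s⌋ = c := by rw [Int.floor_eq_iff]; exact ⟨h1, by push_cast; exact h⟩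
    rcases eq_or_lt_of_le h1 with h0 | h0
    · have hc : ⌈s⌉ = c := by rw [← h0]; exact_mod_cast Int.ceil_intCast c
      unfold fpl; rw [hf, hc, ← h0]; ring
    · have hc : ⌈s⌉ = c + 1 := by
        rw [Int.ceil_eq_iff]
        constructor
        · push_cast; linarith
        · push_cast; linarith
      unfold fpl; rw [hf, hc]; push_cast; ring

lemma sum_shift (s : Finset ℕ) (x : ℕ → ℝ) (i j : ℕ) (hij : i ≠ j) (t : ℝ) :
    ∑ k ∈ s, (if k = i then x i + t else if k = j then x j - t else x k)
      = ∑ k ∈ s, x k + (if i ∈ s then t else 0) - (if j ∈ s then t else 0) := by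
  have h : ∀ k ∈ s, (if k = i then x i + t else if k = j then x j - t else x k)
      = x k + (if k = i then t else 0) - (if k = j then t else 0) := by
    intro k _
    by_cases h1 : k = i
    · subst h1; rw [if_pos rfl, if_pos rfl, if_neg hij]; ring
    · by_cases h2 : k = j
      · subst h2; rw [if_neg h1, if_pos rfl, if_neg h1, if_pos rfl]; ring
      · rw [if_neg h1, if_neg h2, if_neg h1, if_neg h2]; ring
  rw [Finset.sum_congr rfl h, Finset.sum_sub_distrib, Finset.sum_add_distrib,
    Finset.sum_ite_eq' s i (fun _ => t), Finset.sum_ite_eq' s j (fun _ => t)]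

open scoped Classical in
lemma descend (n m : ℕ) (σ : ℕ → ℕ) (a b : ℕ → ℤ) (B : ℤ) (f : ℕ → ℝ → ℝ)
    (hσ : ∀ l, 1 ≤ l → l ≤ m - 1 → 1 ≤ σ l ∧ σ l ≤ n) :
    ∀ N : ℕ, ∀ x : ℕ → ℝ, MemRAPNC n m σ a b B x → (∀ k, k ∉ Icc 1 n → x k = 0) →
    ((Icc 1 n).filter (fun k => Int.fract (x k) ≠ 0)).card ≤ N →
    ∃ y, MemRAPNC n m σ a b B y ∧ IsIntegerVec y ∧
      ∑ i ∈ Icc 1 n, fpl (f i) (y i) ≤ ∑ i ∈ Icc 1 n, fpl (f i) (x i) := by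
  intro N
  induction N with
  | zero =>
    intro x hx h0 hcard
    refine ⟨x, hx, ?_, le_refl _⟩
    intro k
    by_cases hk : k ∈ Icc 1 n
    · have hfr : Int.fract (x k) = 0 := by
        by_contra hc
        have : k ∈ (Icc 1 n).filter (fun k => Int.fract (x k) ≠ 0) := mem_filter.mpr ⟨hk, hc⟩
        have := Finset.card_pos.mpr ⟨k, this⟩
        omega
      refine ⟨⌊x k⌋, ?_⟩
      have := Int.self_sub_floor (x k)
      rw [hfr] at this
      linarith
    · exact ⟨0, by rw [h0 k hk]; norm_num⟩
  | succ N ih =>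
    intro x hx h0 hcard
    set F := (Icc 1 n).filter (fun k => Int.fract (x k) ≠ 0) with hF
    by_cases hle : F.card ≤ N
    · exact ih x hx h0 hle
    have hne : F.Nonempty := Finset.card_pos.mp (by omega)
    set i := F.min' hne with hidef
    have hiF : i ∈ F := F.min'_mem hne
    have hi' : i ∈ Icc 1 n := (mem_filter.mp hiF).1
    have hifr : Int.fract (x i) ≠ 0 := (mem_filter.mp hiF).2
    -- F.erase i is nonempty
    have hFe : (F.erase i).Nonempty := by
      rw [Finset.nonempty_iff_ne_empty]
      intro hemp
      have hFi : F = {i} := by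
        rcases (Finset.erase_eq_empty_iff F i).mp hemp with h | h
        · exact absurd hiF (by rw [h]; exact notMem_empty i)
        · exact h
      -- every other coordinate in Icc 1 n is integer
      have hint : ∀ k ∈ (Icc 1 n).erase i, x k = (⌊x k⌋ : ℝ) := by
        intro k hk
        have hk1 : k ∈ Icc 1 n := mem_of_mem_erase hk
        have hkne : k ≠ i := (mem_erase.mp hk).1
        have : Int.fract (x k) = 0 := by
          by_contra hc
          have : k ∈ F := mem_filter.mpr ⟨hk1, hc⟩
          rw [hFi, mem_singleton] at this
          exact hkne this
        have h2 := Int.self_sub_floor (x k)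
        rw [this] at h2; linarith
      have hsum := hx.2
      rw [← Finset.add_sum_erase _ _ hi'] at hsum
      have hZ : ∑ k ∈ (Icc 1 n).erase i, x k
          = ((∑ k ∈ (Icc 1 n).erase i, ⌊x k⌋ : ℤ) : ℝ) := by
        push_cast
        exact Finset.sum_congr rfl hint
      have hxi : x i = ((B - ∑ k ∈ (Icc 1 n).erase i, ⌊x k⌋ : ℤ) : ℝ) := by
        push_cast
        push_cast at hZ
        linarith
      have : Int.fract (x i) = 0 := by rw [hxi]; exact Int.fract_intCast _
      exact hifr this
    set j := (F.erase i).min' hFe with hjdef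
    have hjF' : j ∈ F.erase i := (F.erase i).min'_mem hFe
    have hjF : j ∈ F := mem_of_mem_erase hjF'
    have hj' : j ∈ Icc 1 n := (mem_filter.mp hjF).1
    have hjfr : Int.fract (x j) ≠ 0 := (mem_filter.mp hjF).2
    have hij : i ≠ j := fun h => (mem_erase.mp hjF').1 h.symm
    have hilt : i < j := lt_of_le_of_ne (F.min'_le j hjF) hij
    have hjmin : ∀ k ∈ F, k ≠ i → j ≤ k := fun k hk hk' =>
      (F.erase i).min'_le k (mem_erase.mpr ⟨hk', hk⟩)
    set α := Int.fract (x i) with hαdef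
    set β := Int.fract (x j) with hβdef
    have hα0 : 0 < α := lt_of_le_of_ne (Int.fract_nonneg _) (Ne.symm hifr)
    have hα1 : α < 1 := Int.fract_lt_one _
    have hβ0 : 0 < β := lt_of_le_of_ne (Int.fract_nonneg _) (Ne.symm hjfr)
    have hβ1 : β < 1 := Int.fract_lt_one _
    set ci := ⌊x i⌋ with hcidef
    set cj := ⌊x j⌋ with hcjdef
    have hαeq : α = x i - ci := (Int.self_sub_floor (x i)).symm
    have hβeq : β = x j - cj := (Int.self_sub_floor (x j)).symm
    set Si := f i ((ci:ℝ)+1) - f i (ci:ℝ) with hSidef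
    set Sj := f j ((cj:ℝ)+1) - f j (cj:ℝ) with hSjdef
    set t := if Si ≤ Sj then min β (1-α) else -(min α (1-β)) with htdef
    have htα1 : -α ≤ t := by
      rw [htdef]; split_ifs
      · have : (0:ℝ) ≤ min β (1-α) := le_min (le_of_lt hβ0) (by linarith)
        linarith
      · simp only [neg_le_neg_iff]; exact min_le_left _ _
    have htα2 : t ≤ 1 - α := by
      rw [htdef]; split_ifs
      · exact min_le_right _ _
      · have : (0:ℝ) ≤ min α (1-β) := le_min (le_of_lt hα0) (by linarith)
        linarith
    have htβ1 : -(1-β) ≤ t := by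
      rw [htdef]; split_ifs
      · have : (0:ℝ) ≤ min β (1-α) := le_min (le_of_lt hβ0) (by linarith)
        linarith
      · simp only [neg_le_neg_iff]; exact min_le_right _ _
    have htβ2 : t ≤ β := by
      rw [htdef]; split_ifs
      · exact min_le_left _ _
      · have : (0:ℝ) ≤ min α (1-β) := le_min (le_of_lt hα0) (by linarith)
        linarith
    have hslope : t * (Si - Sj) ≤ 0 := by
      rw [htdef]; split_ifs with hS
      · have h1 : (0:ℝ) ≤ min β (1-α) := le_min (le_of_lt hβ0) (by linarith)
        have h2 : Si - Sj ≤ 0 := by linarith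
        exact mul_nonpos_of_nonneg_of_nonpos h1 h2
      · push_neg at hS
        have h1 : (0:ℝ) ≤ min α (1-β) := le_min (le_of_lt hα0) (by linarith)
        have h2 : (0:ℝ) ≤ Si - Sj := by linarith
        nlinarith
    -- cell bounds
    have hxi1 : (ci:ℝ) ≤ x i + t := by linarith
    have hxi2 : x i + t ≤ (ci:ℝ) + 1 := by linarith
    have hxj1 : (cj:ℝ) ≤ x j - t := by linarith
    have hxj2 : x j - t ≤ (cj:ℝ) + 1 := by linarith
    set x' := fun k => if k = i then x i + t else if k = j then x j - t else x k with hx'def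
    -- membership of x'
    have hmem' : MemRAPNC n m σ a b B x' := by
      constructor
      · intro l hl1 hl2
        obtain ⟨hσl1, hσl2⟩ := hσ l hl1 hl2
        obtain ⟨hrec1, hrec2⟩ := hx.1 l hl1 hl2
        rw [hx'def, sum_shift _ _ _ _ hij]
        by_cases hi_in : i ∈ Icc 1 (σ l)
        · by_cases hj_in : j ∈ Icc 1 (σ l)
          · rw [if_pos hi_in, if_pos hj_in]
            constructor <;> linarith
          · rw [if_pos hi_in, if_neg hj_in]
            have hσlj : σ l < j := by
              by_contra hc
              push_neg at hc
              exact hj_in (mem_Icc.mpr ⟨le_trans (mem_Icc.mp hi').1 (le_of_lt hilt), hc⟩)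
            -- all k ≤ σ l with k ≠ i are integer
            have hint : ∀ k ∈ (Icc 1 (σ l)).erase i, x k = (⌊x k⌋ : ℝ) := by
              intro k hk
              have hk1 : k ∈ Icc 1 (σ l) := mem_of_mem_erase hk
              have hkne : k ≠ i := (mem_erase.mp hk).1
              have hkn : k ∈ Icc 1 n :=
                mem_Icc.mpr ⟨(mem_Icc.mp hk1).1, le_trans (mem_Icc.mp hk1).2 hσl2⟩
              have : Int.fract (x k) = 0 := by
                by_contra hc
                have hkF : k ∈ F := mem_filter.mpr ⟨hkn, hc⟩
                have := hjmin k hkF hkne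
                have := (mem_Icc.mp hk1).2
                omega
              have h2 := Int.self_sub_floor (x k)
              rw [this] at h2; linarith
            set S := ∑ k ∈ Icc 1 (σ l), x k with hSdef
            set Z := ∑ k ∈ (Icc 1 (σ l)).erase i, ⌊x k⌋ with hZdef
            have hz : S = (Z:ℝ) + x i := by
              rw [hSdef, ← Finset.add_sum_erase _ _ hi_in]
              rw [Finset.sum_congr rfl hint, hZdef]
              push_cast
              ring
            have hxilt : x i < (ci:ℝ) + 1 := by linarith
            have hxigt : (ci:ℝ) < x i := by
              rcases lt_or_eq_of_le (Int.floor_le (x i)) with h | h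
              · exact h
              · exact absurd (by rw [← h] at hαeq; linarith : α = 0) hifr
            have key1 : (a l : ℝ) ≤ (Z:ℝ) + (ci:ℝ) := by
              have h1 : (a l : ℝ) < (Z:ℝ) + (ci:ℝ) + 1 := by
                calc (a l : ℝ) ≤ S := hrec1
                _ = (Z:ℝ) + x i := hz
                _ < (Z:ℝ) + (ci:ℝ) + 1 := by linarith
              have h2 : a l < Z + ci + 1 := by exact_mod_cast h1
              exact_mod_cast Int.lt_add_one_iff.mp h2
            have key2 : (Z:ℝ) + (ci:ℝ) + 1 ≤ (b l : ℝ) := by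
              have h1 : (Z:ℝ) + (ci:ℝ) < (b l : ℝ) := by
                calc (Z:ℝ) + (ci:ℝ) < (Z:ℝ) + x i := by linarith
                _ = S := hz.symm
                _ ≤ (b l : ℝ) := hrec2
              have h2 : Z + ci < b l := by exact_mod_cast h1
              exact_mod_cast Int.add_one_le_iff.mpr h2
            constructor <;> linarith
        · have hi1 : 1 ≤ i := (mem_Icc.mp hi').1
          have hσli : σ l < i := by
            by_contra hc
            push_neg at hc
            exact hi_in (mem_Icc.mpr ⟨hi1, hc⟩)
          have hj_in : j ∉ Icc 1 (σ l) := by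
            intro hc
            have := (mem_Icc.mp hc).2
            omega
          rw [if_neg hi_in, if_neg hj_in]
          constructor <;> linarith
      · rw [hx'def, sum_shift _ _ _ _ hij, if_pos hi', if_pos hj']
        have := hx.2
        linarith
    -- outside zero preserved
    have h0' : ∀ k, k ∉ Icc 1 n → x' k = 0 := by
      intro k hk
      have hki : k ≠ i := fun h => hk (h ▸ hi')
      have hkj : k ≠ j := fun h => hk (h ▸ hj')
      rw [hx'def]
      simp only [if_neg hki, if_neg hkj]
      exact h0 k hk
    -- one of i, j becomes integer
    set F' := (Icc 1 n).filter (fun k => Int.fract (x' k) ≠ 0) with hF'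
    have hw : ∃ w, w ∈ F ∧ w ∉ F' := by
      have hxi'val : x' i = x i + t := by rw [hx'def]; simp
      have hxj'val : x' j = x j - t := by rw [hx'def]; simp [if_neg (Ne.symm hij), hij]
      rw [htdef] at hxi'val hxj'val
      by_cases hS : Si ≤ Sj
      · rcases le_total β (1-α) with hmin | hmin
        · refine ⟨j, hjF, ?_⟩
          rw [hF', mem_filter]
          push_neg
          intro _
          rw [hxj'val, if_pos hS, min_eq_left hmin, hβeq]
          have : x j - (x j - (cj:ℝ)) = (cj:ℝ) := by ring
          rw [this, Int.fract_intCast]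
        · refine ⟨i, hiF, ?_⟩
          rw [hF', mem_filter]
          push_neg
          intro _
          rw [hxi'val, if_pos hS, min_eq_right hmin, hαeq]
          have : x i + (1 - (x i - (ci:ℝ))) = ((ci + 1 : ℤ):ℝ) := by push_cast; ring
          rw [this, Int.fract_intCast]
      · rcases le_total α (1-β) with hmin | hmin
        · refine ⟨i, hiF, ?_⟩
          rw [hF', mem_filter]
          push_neg
          intro _
          rw [hxi'val, if_neg hS, min_eq_left hmin, hαeq]
          have : x i + -(x i - (ci:ℝ)) = (ci:ℝ) := by ring
          rw [this, Int.fract_intCast]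
        · refine ⟨j, hjF, ?_⟩
          rw [hF', mem_filter]
          push_neg
          intro _
          rw [hxj'val, if_neg hS, min_eq_right hmin, hβeq]
          have : x j - -(1 - (x j - (cj:ℝ))) = ((cj + 1 : ℤ):ℝ) := by push_cast; ring
          rw [this, Int.fract_intCast]
    have hsub : F' ⊆ F := by
      intro k hk
      rw [hF', mem_filter] at hk
      by_cases hki : k = i
      · exact hki ▸ hiF
      by_cases hkj : k = j
      · exact hkj ▸ hjF
      rw [hF, mem_filter]
      refine ⟨hk.1, ?_⟩
      have : x' k = x k := by rw [hx'def]; simp only [if_neg hki, if_neg hkj]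
      rw [← this]
      exact hk.2
    have hcard' : F'.card ≤ N := by
      obtain ⟨w, hw1, hw2⟩ := hw
      have : F' ⊂ F := Finset.ssubset_iff_of_subset hsub |>.mpr ⟨w, hw1, hw2⟩
      have := Finset.card_lt_card this
      omega
    -- objective decreases
    have hobj : ∑ k ∈ Icc 1 n, fpl (f k) (x' k) ≤ ∑ k ∈ Icc 1 n, fpl (f k) (x k) := by
      have hjmem : j ∈ (Icc 1 n).erase i := mem_erase.mpr ⟨Ne.symm hij, hj'⟩
      have hsplit : ∀ u : ℕ → ℝ, ∑ k ∈ Icc 1 n, u k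
          = u i + (u j + ∑ k ∈ ((Icc 1 n).erase i).erase j, u k) := by
        intro u
        rw [Finset.add_sum_erase _ _ hjmem, Finset.add_sum_erase _ _ hi']
      rw [hsplit (fun k => fpl (f k) (x' k)), hsplit (fun k => fpl (f k) (x k))]
      have hEq : ∑ k ∈ ((Icc 1 n).erase i).erase j, fpl (f k) (x' k)
          = ∑ k ∈ ((Icc 1 n).erase i).erase j, fpl (f k) (x k) := by
        apply Finset.sum_congr rfl
        intro k hk
        have hkj : k ≠ j := (mem_erase.mp hk).1
        have hki : k ≠ i := (mem_erase.mp (mem_of_mem_erase hk)).1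
        rw [hx'def]
        simp only [if_neg hki, if_neg hkj]
      rw [hEq]
      have hxi'val : x' i = x i + t := by rw [hx'def]; simp
      have hxj'val : x' j = x j - t := by rw [hx'def]; simp [if_neg (Ne.symm hij), hij]
      simp only [hxi'val, hxj'val]
      rw [fpl_affine (f i) ci (x i + t) hxi1 hxi2,
        fpl_affine (f j) cj (x j - t) hxj1 hxj2,
        fpl_affine (f i) ci (x i) (Int.floor_le _) (by linarith),
        fpl_affine (f j) cj (x j) (Int.floor_le _) (by linarith)]
      rw [← hSidef, ← hSjdef]
      have hexp : (f i (ci:ℝ) + (x i + t - (ci:ℝ)) * Si + (f j (cj:ℝ) + (x j - t - (cj:ℝ)) * Sj))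
          - (f i (ci:ℝ) + (x i - (ci:ℝ)) * Si + (f j (cj:ℝ) + (x j - (cj:ℝ)) * Sj))
          = t * (Si - Sj) := by ring
      linarith [hexp, hslope]
    obtain ⟨y, hy1, hy2, hy3⟩ := ih x' hmem' h0' hcard'
    exact ⟨y, hy1, hy2, le_trans hy3 hobj⟩

theorem stmt_12 (n m : ℕ) (hn : 0 < n) (hm : 0 < m)
    (σ : ℕ → ℕ)
    (hσmono : ∀ i j, 1 ≤ i → i < j → j ≤ m - 1 → σ i < σ j)
    (hσrange : ∀ i, 1 ≤ i → i ≤ m - 1 → 1 ≤ σ i ∧ σ i ≤ n)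
    (a b : ℕ → ℤ) (B : ℤ)
    (f : ℕ → ℝ → ℝ) (hconv : ∀ i, ConvexOn ℝ Set.univ (f i))
    (xstar : ℕ → ℝ) (hxstar : MemRAPNC n m σ a b B xstar)
    (hint : IsIntegerVec xstar)
    (hopt : ∀ y : ℕ → ℝ, MemRAPNC n m σ a b B y → IsIntegerVec y →
      ∑ i ∈ Finset.Icc 1 n, fpl (f i) (xstar i) ≤ ∑ i ∈ Finset.Icc 1 n, fpl (f i) (y i)) :
    ∀ x : ℕ → ℝ, MemRAPNC n m σ a b B x →
      ∑ i ∈ Finset.Icc 1 n, fpl (f i) (xstar i) ≤ ∑ i ∈ Finset.Icc 1 n, fpl (f i) (x i) := by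
  intro x hx
  classical
  set x0 : ℕ → ℝ := fun k => if k ∈ Icc 1 n then x k else 0 with hx0def
  have hagree : ∀ s : Finset ℕ, s ⊆ Icc 1 n → ∑ k ∈ s, x0 k = ∑ k ∈ s, x k := by
    intro s hs
    apply Finset.sum_congr rfl
    intro k hk
    rw [hx0def]
    simp only [if_pos (hs hk)]
  have hx0mem : MemRAPNC n m σ a b B x0 := by
    constructor
    · intro l hl1 hl2
      have hσl := hσrange l hl1 hl2
      rw [hagree _ (Finset.Icc_subset_Icc_right hσl.2)]
      exact hx.1 l hl1 hl2
    · rw [hagree _ (subset_refl _)]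
      exact hx.2
  have h0 : ∀ k, k ∉ Icc 1 n → x0 k = 0 := by
    intro k hk
    rw [hx0def]
    simp only [if_neg hk]
  obtain ⟨y, hy1, hy2, hy3⟩ := descend n m σ a b B f hσrange
    ((Icc 1 n).filter (fun k => Int.fract (x0 k) ≠ 0)).card x0 hx0mem h0 (le_refl _)
  have hobj_eq : ∑ k ∈ Icc 1 n, fpl (f k) (x0 k) = ∑ k ∈ Icc 1 n, fpl (f k) (x k) := by
    apply Finset.sum_congr rfl
    intro k hk
    rw [hx0def]
    simp only [if_pos hk]
  calc ∑ k ∈ Icc 1 n, fpl (f k) (xstar k) ≤ ∑ k ∈ Icc 1 n, fpl (f k) (y k) := hopt y hy1 hy2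
    _ ≤ ∑ k ∈ Icc 1 n, fpl (f k) (x0 k) := hy3
    _ = ∑ k ∈ Icc 1 n, fpl (f k) (x k) := hobj_eq
end

section
/- Let x, x* ∈ ℝ^n with Σ_{k=1}^n x_k ≤ Σ_{k=1}^n x*_k, and suppose x_s ≥ x*_s + n - 1 for some index s, with n ≥ 2. Let r be the greatest index in {1,…,s} such that Σ_{k=1}^{r-1} x_k ≥ Σ_{k=1}^{r-1} x*_k (r exists since the condition holds vacuously for r = 1), and t the smallest index in {s,…,n} with Σ_{k=1}^{t} x_k ≤ Σ_{k=1}^{t} x*_k (t exists by the total-sum assumption). Then Σ_{i=r}^{t} x*_i ≥ Σ_{i=r}^{t} x_i, and consequently there exists u ∈ {r,…,t} \ {s} with x*_u ≥ x_u + 1. -/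
open Finset

theorem stmt_13 (n : ℕ) (hn : 2 ≤ n) (x xstar : ℕ → ℝ)
    (hsum : ∑ k ∈ Finset.Icc 1 n, x k ≤ ∑ k ∈ Finset.Icc 1 n, xstar k)
    (s : ℕ) (hs1 : 1 ≤ s) (hsn : s ≤ n)
    (hxs : x s ≥ xstar s + (n : ℝ) - 1)
    (r : ℕ) (hr1 : 1 ≤ r) (hrs : r ≤ s)
    (hrprop : ∑ k ∈ Finset.Icc 1 (r - 1), x k ≥ ∑ k ∈ Finset.Icc 1 (r - 1), xstar k)
    (hrmax : ∀ j, r < j → j ≤ s →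
      ∑ k ∈ Finset.Icc 1 (j - 1), x k < ∑ k ∈ Finset.Icc 1 (j - 1), xstar k)
    (t : ℕ) (hts : s ≤ t) (htn : t ≤ n)
    (htprop : ∑ k ∈ Finset.Icc 1 t, x k ≤ ∑ k ∈ Finset.Icc 1 t, xstar k)
    (htmin : ∀ j, s ≤ j → j < t →
      ∑ k ∈ Finset.Icc 1 j, x k > ∑ k ∈ Finset.Icc 1 j, xstar k) :
    (∑ i ∈ Finset.Icc r t, xstar i ≥ ∑ i ∈ Finset.Icc r t, x i) ∧
    ∃ u, r ≤ u ∧ u ≤ t ∧ u ≠ s ∧ xstar u ≥ x u + 1 := by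
  have hrt : r ≤ t := hrs.trans hts
  have e1 : ∀ f : ℕ → ℝ, ∑ k ∈ Finset.Icc 1 (r-1), f k + ∑ k ∈ Finset.Icc r t, f k
      = ∑ k ∈ Finset.Icc 1 t, f k := by
    intro f
    rw [← Finset.Ico_add_one_right_eq_Icc r t, ← Finset.Ico_add_one_right_eq_Icc 1 t,
      ← Finset.Ico_add_one_right_eq_Icc 1 (r-1)]
    have hh : r - 1 + 1 = r := by omega
    rw [hh]
    exact Finset.sum_Ico_consecutive f hr1 (by omega)
  have key : ∑ i ∈ Finset.Icc r t, xstar i ≥ ∑ i ∈ Finset.Icc r t, x i := by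
    have h1 := e1 x
    have h2 := e1 xstar
    linarith
  refine ⟨key, ?_⟩
  set S := (Finset.Icc r t).erase s with hS
  have hsmem : s ∈ Finset.Icc r t := Finset.mem_Icc.mpr ⟨hrs, hts⟩
  have hadd := Finset.sum_erase_add (Finset.Icc r t) (fun i => xstar i - x i) hsmem
  have hdiff : 0 ≤ ∑ i ∈ Finset.Icc r t, (xstar i - x i) := by
    rw [Finset.sum_sub_distrib]; linarith
  have hbig : (n : ℝ) - 1 ≤ ∑ i ∈ S, (xstar i - x i) := by
    simp only [hS] at hadd ⊢
    linarith
  have hcardS : S.card = t - r := by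
    rw [hS, Finset.card_erase_of_mem hsmem, Nat.card_Icc]; omega
  have hcard : (S.card : ℝ) ≤ (n : ℝ) - 1 := by
    rw [hcardS]
    have : (t - r : ℕ) ≤ n - 1 := by omega
    have h2 := Nat.one_le_iff_ne_zero.mp (by omega : 1 ≤ n)
    push_cast
    have : ((t - r : ℕ) : ℝ) ≤ ((n - 1 : ℕ) : ℝ) := by exact_mod_cast this
    have hn1 : ((n - 1 : ℕ) : ℝ) = (n : ℝ) - 1 := by
      push_cast [Nat.cast_sub (by omega : 1 ≤ n)]; ring
    linarith
  have hne : S.Nonempty := by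
    rcases S.eq_empty_or_nonempty with h | h
    · exfalso
      rw [h, Finset.sum_empty] at hbig
      have : (2 : ℝ) ≤ (n : ℝ) := by exact_mod_cast hn
      linarith
    · exact h
  have hsum1 : ∑ i ∈ S, (1 : ℝ) ≤ ∑ i ∈ S, (xstar i - x i) := by
    rw [Finset.sum_const, nsmul_eq_mul, mul_one]
    linarith
  obtain ⟨u, huS, hu⟩ := Finset.exists_le_of_sum_le hne hsum1
  have hus : u ≠ s := Finset.ne_of_mem_erase huS
  have humem : u ∈ Finset.Icc r t := Finset.mem_of_mem_erase huS
  obtain ⟨h1, h2⟩ := Finset.mem_Icc.mp humem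
  exact ⟨u, h1, h2, hus, by linarith⟩
end
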